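/- Let A = kQ/I be a graded gentle algebra and e a sum of vertex idempotents. If both A_e and eAe are proper, then A is proper; dually, if both A_e and eAe are homologically smooth, then A is homologically smooth. Combined with the previous characterization, if any two of the three algebras A, eAe, A_e are both homologically smooth and proper, then so is the third. -/

import Mathlib

universe w

/-- A graded quiver with a set of quadratic monomial relations: the data `(Q, I)`
presenting a graded quadratic monomial algebra `A = kQ/⟨I⟩` (viewed as a dg algebra
with zero differential).  `rel a b` means that the length-two path `ab` lies in `I`;
`deg` is the grading of the arrows. -/
structure QuadData : Type (w + 1) where
  V : Type w
  E : Type w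
  src : E → V
  tgt : E → V
  deg : E → ℤ
  rel : E → E → Prop
  rel_comp : ∀ a b, rel a b → tgt a = src b

namespace QuadData

variable (Q : QuadData)

/-- A list of arrows is composable (i.e. is a path). -/
def Composable (l : List Q.E) : Prop := l.Chain' fun a b => Q.tgt a = Q.src b

/-- No two consecutive arrows of the path form a relation. -/
def AvoidsRel (l : List Q.E) : Prop := l.Chain' fun a b => ¬ Q.rel a b

/-- All consecutive pairs of arrows of the path are relations. -/
def AllRel (l : List Q.E) : Prop := l.Chain' fun a b => Q.rel a b

end QuadData

namespace QuadData

variable (Q : QuadData)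

/-- There is a cyclic path `α₁ ⋯ αₙ` with `αᵢαᵢ₊₁ ∈ I` for all `i ∈ ℤ/nℤ`. -/
def RelCycle : Prop :=
  ∃ (l : List Q.E) (h : l ≠ []), Q.AllRel l ∧ Q.rel (l.getLast h) (l.head h)

/-- There is a cyclic path `α₁ ⋯ αₙ` with `αᵢαᵢ₊₁ ∉ I` for all `i ∈ ℤ/nℤ`. -/
def RelFreeCycle : Prop :=
  ∃ (l : List Q.E) (h : l ≠ []), Q.Composable l ∧ Q.AvoidsRel l ∧
    Q.tgt (l.getLast h) = Q.src (l.head h) ∧ ¬ Q.rel (l.getLast h) (l.head h)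

/-- Combinatorial characterisation of homological smoothness of `kQ/⟨I⟩`:
there is no cyclic path all of whose consecutive pairs are relations. -/
def SmoothP : Prop := ¬ Q.RelCycle

/-- Combinatorial characterisation of properness of `kQ/⟨I⟩`:
there is no relation-free cyclic path. -/
def ProperP : Prop := ¬ Q.RelFreeCycle

/-- `A = kQ/⟨I⟩` is homologically smooth iff its minimal bimodule resolution, whose
terms are indexed by the paths all of whose consecutive pairs lie in `I`, is finite. -/
def IsSmoothC : Prop := Finite {l : List Q.E // Q.AllRel l}

/-- `A = kQ/⟨I⟩` (with zero differential) is proper iff its total cohomology, i.e.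
`A` itself, is finite dimensional over `k`; a basis of `A` is given by the
relation-avoiding paths. -/
def IsProperC : Prop := Finite {l : List Q.E // Q.Composable l ∧ Q.AvoidsRel l}

/-- The graded quadratic dual `A⁽ᴵ⁾ = kQᵒᵖ/⟨I^⊥⟩`, where
`I^⊥ = {βᵒᵖαᵒᵖ : αβ ∉ I}` and `|αᵒᵖ| = 1 - |α|`. -/
@[reducible] def dual : QuadData where
  V := Q.V
  E := Q.E
  src := Q.tgt
  tgt := Q.src
  deg := fun e => 1 - Q.deg e
  rel := fun x y => Q.tgt y = Q.src x ∧ ¬ Q.rel y x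
  rel_comp := fun _ _ h => h.1.symm

/-- An arrow of the quiver of `A_e` (for `supp` the support of the idempotent `e`):
a path `α₁ ⋯ αₛ` all of whose consecutive pairs are relations passing through
vertices of `supp`, with endpoints outside `supp`. -/
structure CutArrow (supp : Set Q.V) where
  letters : List Q.E
  ne : letters ≠ []
  chain : letters.Chain' fun a b => Q.rel a b ∧ Q.src b ∈ supp
  src_out : Q.src (letters.head ne) ∉ supp
  tgt_out : Q.tgt (letters.getLast ne) ∉ supp

/-- The graded quadratic monomial algebra `A_e` obtained by collapsing the relations
through the vertices in `supp`: vertices `Q₀ ∖ supp`, arrows `[α₁ ⋯ αₛ]` of degree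
`Σ|αᵢ| - s + 1`, and relations `[α₁ ⋯ αₛ][β₁ ⋯ βₜ]` whenever `αₛβ₁ ∈ I`. -/
@[reducible] def cut (supp : Set Q.V) : QuadData where
  V := {v : Q.V // v ∉ supp}
  E := Q.CutArrow supp
  src := fun p => ⟨Q.src (p.letters.head p.ne), p.src_out⟩
  tgt := fun p => ⟨Q.tgt (p.letters.getLast p.ne), p.tgt_out⟩
  deg := fun p => ((p.letters.map Q.deg).sum - p.letters.length) + 1
  rel := fun p q => Q.rel (p.letters.getLast p.ne) (q.letters.head q.ne)
  rel_comp := fun _ _ h => Subtype.ext (Q.rel_comp _ _ h)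

/-- An arrow of the presentation of the idempotent subalgebra `eAe`:
a relation-avoiding path with endpoints in `supp` and interior outside `supp`. -/
structure IdemArrow (supp : Set Q.V) where
  letters : List Q.E
  ne : letters ≠ []
  chain : letters.Chain' fun a b => Q.tgt a = Q.src b ∧ ¬ Q.rel a b ∧ Q.src b ∉ supp
  src_in : Q.src (letters.head ne) ∈ supp
  tgt_in : Q.tgt (letters.getLast ne) ∈ supp

/-- The idempotent subalgebra `eAe` as a graded quadratic monomial algebra. -/
@[reducible] def idem (supp : Set Q.V) : QuadData where
  V := {v : Q.V // v ∈ supp}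
  E := Q.IdemArrow supp
  src := fun p => ⟨Q.src (p.letters.head p.ne), p.src_in⟩
  tgt := fun p => ⟨Q.tgt (p.letters.getLast p.ne), p.tgt_in⟩
  deg := fun p => (p.letters.map Q.deg).sum
  rel := fun p q => Q.rel (p.letters.getLast p.ne) (q.letters.head q.ne)
  rel_comp := fun _ _ h => Subtype.ext (Q.rel_comp _ _ h)

/-- An isomorphism of presentations of graded quadratic monomial algebras: it
induces an isomorphism of the associated dg algebras (with zero differential). -/
structure Iso (Q₁ Q₂ : QuadData) where
  vEquiv : Q₁.V ≃ Q₂.V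
  eEquiv : Q₁.E ≃ Q₂.E
  map_src : ∀ e, Q₂.src (eEquiv e) = vEquiv (Q₁.src e)
  map_tgt : ∀ e, Q₂.tgt (eEquiv e) = vEquiv (Q₁.tgt e)
  map_deg : ∀ e, Q₂.deg (eEquiv e) = Q₁.deg e
  map_rel : ∀ a b, Q₁.rel a b ↔ Q₂.rel (eEquiv a) (eEquiv b)

/-- The conditions for `(Q, I)` to present a (graded) gentle algebra. -/
structure IsGentle (Q : QuadData) : Prop where
  finV : Finite Q.V
  finE : Finite Q.E
  src_two : ∀ a b c : Q.E, Q.src a = Q.src b → Q.src b = Q.src c → a = b ∨ b = c ∨ a = c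
  tgt_two : ∀ a b c : Q.E, Q.tgt a = Q.tgt b → Q.tgt b = Q.tgt c → a = b ∨ b = c ∨ a = c
  rel_right : ∀ a b b', Q.rel a b → Q.rel a b' → b = b'
  rel_left : ∀ a a' b, Q.rel a b → Q.rel a' b → a = a'
  nonrel_right : ∀ a b b', Q.tgt a = Q.src b → Q.tgt a = Q.src b' →
    ¬ Q.rel a b → ¬ Q.rel a b' → b = b'
  nonrel_left : ∀ a a' b, Q.tgt a = Q.src b → Q.tgt a' = Q.src b →
    ¬ Q.rel a b → ¬ Q.rel a' b → a = a'

end QuadData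
namespace CycAux

variable {α : Type*} {β : Type*}

theorem getLast_congr {l l' : List α} (e : l = l') (h : l ≠ []) (h' : l' ≠ []) :
    l.getLast h = l'.getLast h' := by subst e; rfl

theorem head_congr {l l' : List α} (e : l = l') (h : l ≠ []) (h' : l' ≠ []) :
    l.head h = l'.head h' := by subst e; rfl

theorem getLast_append_right {l r : List α} (hr : r ≠ []) (h : l ++ r ≠ []) :
    (l ++ r).getLast h = r.getLast hr := by
  induction l with
  | nil => rfl
  | cons x l ih =>
    have hlr : l ++ r ≠ [] := by
      rcases r with _ | _
      · exact absurd rfl hr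
      · simp
    have e0 : (x :: l) ++ r = x :: (l ++ r) := rfl
    rw [getLast_congr e0 h (by simp [hlr]), List.getLast_cons hlr]
    exact ih hlr

theorem getLast_head_congr {R : α → α → Prop} {b b' c c' : List α}
    (eb : b = b') (ec : c = c') (hb' : b' ≠ []) (hc' : c' ≠ [])
    (h : R (b'.getLast hb') (c'.head hc')) (hb : b ≠ []) (hc : c ≠ []) :
    R (b.getLast hb) (c.head hc) := by subst eb; subst ec; exact h

theorem chain'_imp_mem {R R' : α → α → Prop} {l : List α}
    (H : ∀ x ∈ l, ∀ y ∈ l, R x y → R' x y) (h : l.Chain' R) : l.Chain' R' := by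
  induction l with
  | nil => exact List.isChain_nil
  | cons a t ih =>
    simp only [List.Chain', List.isChain_cons] at h ⊢
    refine ⟨fun y hy => H a (by simp) y ?_ (h.1 y hy),
      ih (fun x hx y hy hr => H x (List.mem_cons_of_mem _ hx) y (List.mem_cons_of_mem _ hy) hr) h.2⟩
    cases t with
    | nil => simp at hy
    | cons b t' =>
      simp only [List.head?_cons, Option.mem_def, Option.some.injEq] at hy
      subst hy; simp

theorem chain'_and {R S : α → α → Prop} {l : List α} (h1 : l.Chain' R) (h2 : l.Chain' S) :
    l.Chain' fun a b => R a b ∧ S a b := by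
  induction l with
  | nil => exact List.isChain_nil
  | cons a t ih =>
    simp only [List.Chain', List.isChain_cons] at h1 h2 ⊢
    exact ⟨fun y hy => ⟨h1.1 y hy, h2.1 y hy⟩, ih h1.2 h2.2⟩

theorem chain'_cases_last {T : β → β → Prop} :
    ∀ (bs : List β) (h : bs ≠ []), bs.Chain' T → ∀ b ∈ bs, b = bs.getLast h ∨ ∃ c ∈ bs, T b c
  | [x], _, _, b, hb => by left; simpa using hb
  | x :: y :: t, _, hch, b, hb => by
    rcases List.mem_cons.mp hb with rfl | hb'
    · exact Or.inr ⟨y, by simp, (List.isChain_cons_cons.mp hch).1⟩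
    · rcases chain'_cases_last (y :: t) (by simp) (List.isChain_cons_cons.mp hch).2 b hb' with he | ⟨c, hc, hT⟩
      · left; rw [List.getLast_cons (by simp)]; exact he
      · exact Or.inr ⟨c, List.mem_cons_of_mem _ hc, hT⟩

theorem chain'_cases_head {T : β → β → Prop} :
    ∀ (bs : List β) (h : bs ≠ []), bs.Chain' T → ∀ c ∈ bs, c = bs.head h ∨ ∃ b ∈ bs, T b c
  | x :: t, _, hch, c, hc => by
    rcases List.mem_cons.mp hc with rfl | hc'
    · exact Or.inl rfl
    · rcases t with _ | ⟨y, t'⟩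
      · simp at hc'
      · rcases chain'_cases_head (y :: t') (by simp) (List.isChain_cons_cons.mp hch).2 c hc' with he | ⟨b, hbm, hT⟩
        · refine Or.inr ⟨x, by simp, ?_⟩
          rw [show c = y from he]
          exact (List.isChain_cons_cons.mp hch).1
        · exact Or.inr ⟨b, List.mem_cons_of_mem _ hbm, hT⟩

theorem flatten_ne {bs : List (List α)} (hbs : bs ≠ []) (hnn : [] ∉ bs) : bs.flatten ≠ [] := by
  rcases bs with _ | ⟨b, bs'⟩
  · exact absurd rfl hbs
  · rcases b with _ | ⟨b0, b'⟩
    · exact absurd (by simp) hnn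
    · simp

theorem head_flatten : ∀ (bs : List (List α)) (hbs : bs ≠ []) (hf : bs.flatten ≠ [])
    (h2 : bs.head hbs ≠ []), bs.flatten.head hf = (bs.head hbs).head h2
  | (b0 :: b') :: bs', _, _, _ => rfl
  | [] :: bs', _, _, h2 => absurd rfl h2

theorem getLast_flatten : ∀ (bs : List (List α)) (hbs : bs ≠ []) (hnn : [] ∉ bs)
    (hf : bs.flatten ≠ []) (h2 : bs.getLast hbs ≠ []),
    bs.flatten.getLast hf = (bs.getLast hbs).getLast h2
  | [b], _, hnn, hf, h2 => by
    have e : ([b] : List (List α)).flatten = b := by simp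
    exact getLast_congr e hf h2
  | b :: c :: bs', hbs, hnn, hf, h2 => by
    have hnn' : [] ∉ c :: bs' := fun hx => hnn (List.mem_cons_of_mem _ hx)
    have h3 : (c :: bs').flatten ≠ [] := flatten_ne (by simp) hnn'
    have hne2 : b ++ (c :: bs').flatten ≠ [] := by
      rcases hfl : (c :: bs').flatten with _ | _
      · exact absurd hfl h3
      · simp
    have hlast : (b :: c :: bs').getLast hbs = (c :: bs').getLast (by simp) :=
      List.getLast_cons (by simp)
    have h2' : (c :: bs').getLast (by simp) ≠ [] := by rw [← hlast]; exact h2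
    calc (b :: c :: bs').flatten.getLast hf
        = (b ++ (c :: bs').flatten).getLast hne2 := getLast_congr rfl _ _
      _ = (c :: bs').flatten.getLast h3 := getLast_append_right h3 _
      _ = ((c :: bs').getLast (by simp)).getLast h2' :=
          getLast_flatten (c :: bs') (by simp) hnn' h3 h2'
      _ = ((b :: c :: bs').getLast hbs).getLast h2 := getLast_congr hlast.symm h2' h2

theorem attach_ne {l : List α} (h : l ≠ []) : l.attach ≠ [] := by
  intro h2; apply h
  rw [← List.attach_map_subtype_val l, h2]; rfl

theorem getLast_attach_val {l : List α} (h : l ≠ []) (h2 : l.attach ≠ []) :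
    (l.attach.getLast h2).1 = l.getLast h := by
  have e : l.attach.map Subtype.val = l := List.attach_map_subtype_val l
  have h3 : l.attach.map Subtype.val ≠ [] := by rw [e]; exact h
  exact ((List.getLast_map h3).symm).trans (getLast_congr e h3 h)

theorem head_attach_val {l : List α} (h : l ≠ []) (h2 : l.attach ≠ []) :
    (l.attach.head h2).1 = l.head h := by
  have e : l.attach.map Subtype.val = l := List.attach_map_subtype_val l
  have h3 : l.attach.map Subtype.val ≠ [] := by rw [e]; exact h
  exact ((List.head_map h3).symm).trans (head_congr e h3 h)

theorem chain'_attach_of {T : α → α → Prop} {l : List α} (h : l.Chain' T) :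
    l.attach.Chain' fun a b => T a.1 b.1 := by
  refine (List.isChain_map (f := Subtype.val)).mp ?_
  rw [List.attach_map_subtype_val]
  exact h

theorem cyc_rotate {R : α → α → Prop} {s t : List α} {a : α}
    (h1 : (s ++ a :: t).Chain' R)
    (h2 : ∀ hx : s ++ a :: t ≠ [], R ((s ++ a :: t).getLast hx) ((s ++ a :: t).head hx)) :
    (a :: (t ++ s)).Chain' R ∧
      ∀ hy : a :: (t ++ s) ≠ [], R ((a :: (t ++ s)).getLast hy) ((a :: (t ++ s)).head hy) := by
  rcases s with _ | ⟨s0, s'⟩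
  · simp only [List.nil_append] at h1 h2
    rw [List.append_nil]
    exact ⟨h1, h2⟩
  · have hs : (s0 :: s' : List α) ≠ [] := by simp
    obtain ⟨hcs, hcat, hbd⟩ := List.isChain_append.mp h1
    have hgl : ((s0 :: s') ++ a :: t).getLast (by simp) = (a :: t).getLast (by simp) :=
      getLast_append_right (by simp) _
    have hcyc : R ((a :: t).getLast (by simp)) s0 := by
      have := h2 (by simp)
      rw [hgl] at this
      exact this
    have hRsa : R ((s0 :: s').getLast hs) a := by
      refine hbd _ ?_ a (by simp)
      rw [List.getLast?_eq_getLast hs]; rfl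
    constructor
    · rw [show a :: (t ++ s0 :: s') = (a :: t) ++ s0 :: s' from rfl]
      refine List.isChain_append.mpr ⟨hcat, hcs, ?_⟩
      intro x hx y hy
      rw [List.getLast?_eq_getLast (by simp : (a :: t : List α) ≠ [])] at hx
      simp only [Option.mem_def, Option.some.injEq] at hx hy
      subst hx
      simp only [List.head?_cons] at hy
      cases hy
      exact hcyc
    · intro hy
      show R (((a :: t) ++ s0 :: s').getLast hy) a
      rw [getLast_append_right hs hy]
      exact hRsa

theorem splitLinear {R : α → α → Prop} (S : α → Prop) :
    ∀ l : List α, l.Chain' R → ∃ bs : List (List α),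
      bs.flatten = l ∧ [] ∉ bs ∧ (∀ b ∈ bs, b.Chain' fun x y => R x y ∧ ¬ S y) ∧
      bs.Chain' fun _ c => ∀ h : c ≠ [], S (c.head h)
  | [], _ => ⟨[], by simp, by simp, by simp, by simp [List.Chain']⟩
  | ch :: t, h => by
    classical
    obtain ⟨bs, hflat, hnn, hinner, houter⟩ := splitLinear S t h.tail
    rcases bs with _ | ⟨b, bs'⟩
    · have ht : t = [] := by simpa using hflat.symm
      subst ht
      exact ⟨[[ch]], by simp, by simp, by simp [List.Chain'], by simp [List.Chain']⟩
    · rcases b with _ | ⟨b0, b''⟩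
      · exact absurd (by simp) hnn
      · have hflat' : b0 :: (b'' ++ bs'.flatten) = t := by simpa using hflat
        have hRch : R ch b0 := by
          rw [← hflat'] at h
          exact (List.isChain_cons_cons.mp h).1
        by_cases hS : S b0
        · refine ⟨[ch] :: (b0 :: b'') :: bs', by simpa using hflat, ?_, ?_, ?_⟩
          · intro hx
            rcases List.mem_cons.mp hx with h' | h'
            · simp at h'
            · exact hnn h'
          · intro b hb
            rcases List.mem_cons.mp hb with rfl | h'
            · simp [List.Chain']
            · exact hinner b h'
          · simp only [List.Chain', List.isChain_cons_cons]
            exact ⟨fun _ => hS, houter⟩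
        · refine ⟨(ch :: b0 :: b'') :: bs', by simpa using hflat, ?_, ?_, ?_⟩
          · intro hx
            rcases List.mem_cons.mp hx with h' | h'
            · simp at h'
            · exact hnn (List.mem_cons_of_mem _ h')
          · intro b hb
            rcases List.mem_cons.mp hb with rfl | h'
            · simp only [List.Chain', List.isChain_cons_cons]
              exact ⟨⟨hRch, hS⟩, hinner _ (by simp)⟩
            · exact hinner b (List.mem_cons_of_mem _ h')
          · simp only [List.Chain', List.isChain_cons] at houter ⊢
            exact ⟨houter.1, houter.2⟩

theorem splitCyclic {R : α → α → Prop} (S : α → Prop) {l : List α} (hl : l ≠ [])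
    (hch : l.Chain' R) (hcl : R (l.getLast hl) (l.head hl)) {a : α} (hal : a ∈ l) (hSa : S a) :
    ∃ (bs : List (List α)) (hbs : bs ≠ []),
      (∀ b ∈ bs, ∃ hb : b ≠ [], S (b.head hb) ∧ (b.Chain' fun x y => R x y ∧ ¬ S y) ∧
        (∀ x ∈ b, x ∈ l) ∧ ∃ y ∈ l, R (b.getLast hb) y ∧ S y) ∧
      (bs.Chain' fun b c => ∀ (h1 : b ≠ []) (h2 : c ≠ []), R (b.getLast h1) (c.head h2)) ∧
      ∀ (h1 : bs.getLast hbs ≠ []) (h2 : bs.head hbs ≠ []),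
        R ((bs.getLast hbs).getLast h1) ((bs.head hbs).head h2) := by
  classical
  obtain ⟨s, t, rfl⟩ := List.append_of_mem hal
  have hrot := cyc_rotate (R := R) (s := s) (t := t) (a := a) hch (fun _ => hcl)
  have hrne : (a :: (t ++ s) : List α) ≠ [] := by simp
  obtain ⟨bs, hflat, hnn, hinner, hSchain⟩ := splitLinear S (a :: (t ++ s)) hrot.1
  have hbs : bs ≠ [] := by
    intro h; rw [h] at hflat; simp at hflat
  have hne : ∀ b ∈ bs, b ≠ [] := fun b hb h => hnn (h ▸ hb)
  have hmemr : ∀ x, x ∈ a :: (t ++ s) ↔ x ∈ s ++ a :: t := by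
    intro x; simp; tauto
  have hfne : bs.flatten ≠ [] := by rw [hflat]; exact hrne
  have hb0 : ∀ h0 : bs.head hbs ≠ [], (bs.head hbs).head h0 = a := by
    intro h0
    have e1 := head_flatten bs hbs hfne h0
    have e2 : bs.flatten.head hfne = (a :: (t ++ s)).head hrne := head_congr hflat _ _
    rw [← e1, e2]
    rfl
  have hRchain : bs.Chain' fun b c => ∀ (h1 : b ≠ []) (h2 : c ≠ []), R (b.getLast h1) (c.head h2) := by
    have hcf : bs.flatten.Chain' R := by rw [hflat]; exact hrot.1
    have := (List.isChain_flatten hnn).mp hcf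
    refine this.2.imp (fun b c hx h1 h2 => ?_)
    refine hx _ ?_ _ ?_
    · rw [List.getLast?_eq_getLast h1]; rfl
    · rw [List.head?_eq_head h2]; rfl
  have hSheads : ∀ b ∈ bs, ∀ h0 : b ≠ [], S (b.head h0) := by
    intro b hb h0
    rcases chain'_cases_head bs hbs hSchain b hb with he | ⟨c, _, hT⟩
    · rw [head_congr he h0 (hne _ (List.head_mem hbs)), hb0]; exact hSa
    · exact hT h0
  have hmemb : ∀ b ∈ bs, ∀ x ∈ b, x ∈ s ++ a :: t := by
    intro b hb x hx
    rw [← hmemr x, ← hflat]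
    exact List.mem_flatten.mpr ⟨b, hb, hx⟩
  have hclose : ∀ (h1 : bs.getLast hbs ≠ []) (h2 : bs.head hbs ≠ []),
      R ((bs.getLast hbs).getLast h1) ((bs.head hbs).head h2) := by
    intro h1 h2
    have hc := hrot.2 hrne
    have e1 : (a :: (t ++ s)).getLast hrne = (bs.getLast hbs).getLast h1 :=
      (getLast_congr hflat.symm _ _).trans (getLast_flatten bs hbs hnn hfne h1)
    rw [e1] at hc
    rw [hb0 h2]
    exact hc
  refine ⟨bs, hbs, ?_, hRchain, hclose⟩
  intro b hb
  refine ⟨hne b hb, hSheads b hb _, hinner b hb, hmemb b hb, ?_⟩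
  rcases chain'_cases_last bs hbs hRchain b hb with he | ⟨c, hcbs, hT⟩
  · refine ⟨a, by simp, ?_, hSa⟩
    have hx := hclose (by rw [← he]; exact hne b hb) (hne _ (List.head_mem hbs))
    rw [hb0] at hx
    exact getLast_head_congr (c := [a]) (c' := [a]) he rfl _ (by simp) (by
      rw [show ([a] : List α).head (by simp) = a from rfl]; exact hx) _ (by simp)
  · refine ⟨c.head (hne c hcbs), hmemb c hcbs _ (List.head_mem _), hT _ _, hSheads c hcbs _⟩

theorem arrow_flatten (lt : β → List α) (hlt : ∀ p, lt p ≠ [])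
    {R : α → α → Prop} (hchain : ∀ p, (lt p).Chain' R) {as : List β} (has : as ≠ [])
    (houter : as.Chain' fun p q => R ((lt p).getLast (hlt p)) ((lt q).head (hlt q)))
    (hclose : R ((lt (as.getLast has)).getLast (hlt _)) ((lt (as.head has)).head (hlt _))) :
    ∃ (L : List α) (hL : L ≠ []), L.Chain' R ∧ R (L.getLast hL) (L.head hL) ∧
      ∀ x ∈ L, ∃ p ∈ as, x ∈ lt p := by
  classical
  have hnn : [] ∉ as.map lt := by
    intro hx
    obtain ⟨p, _, hp⟩ := List.mem_map.mp hx
    exact hlt p hp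
  have hbsne : as.map lt ≠ [] := by
    intro h
    rcases as with _ | ⟨p, as'⟩
    · exact has rfl
    · simp at h
  have hf : (as.map lt).flatten ≠ [] := flatten_ne hbsne hnn
  refine ⟨(as.map lt).flatten, hf, ?_, ?_, ?_⟩
  · refine (List.isChain_flatten hnn).mpr ⟨?_, ?_⟩
    · intro b hb
      obtain ⟨p, _, rfl⟩ := List.mem_map.mp hb
      exact hchain p
    · rw [List.isChain_map]
      refine houter.imp (fun p q h x hx y hy => ?_)
      rw [List.getLast?_eq_getLast (hlt p)] at hx
      rw [List.head?_eq_head (hlt q)] at hy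
      simp only [Option.mem_def, Option.some.injEq] at hx hy
      subst hx; subst hy
      exact h
  · have h1 : (as.map lt).getLast hbsne = lt (as.getLast has) := by
      rw [List.getLast_map hbsne]
    have h2 : (as.map lt).head hbsne = lt (as.head has) := by
      rw [List.head_map hbsne]
    have e1 : (as.map lt).flatten.getLast hf = (lt (as.getLast has)).getLast (hlt _) :=
      (getLast_flatten _ hbsne hnn hf (by rw [h1]; exact hlt _)).trans (getLast_congr h1 _ _)
    have e2 : (as.map lt).flatten.head hf = (lt (as.head has)).head (hlt _) :=
      (head_flatten _ hbsne hf (by rw [h2]; exact hlt _)).trans (head_congr h2 _ _)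
    rw [e1, e2]
    exact hclose
  · intro x hx
    obtain ⟨b, hb, hxb⟩ := List.mem_flatten.mp hx
    obtain ⟨p, hp, rfl⟩ := List.mem_map.mp hb
    exact ⟨p, hp, hxb⟩

end CycAux
namespace QuadData

variable {Q : QuadData} {supp : Set Q.V}

/-- The "mixed" relation: composable, with a relation exactly at `supp`-vertices. -/
def Mrel (Q : QuadData) (supp : Set Q.V) (x y : Q.E) : Prop :=
  Q.tgt x = Q.src y ∧ (Q.src y ∈ supp → Q.rel x y) ∧ (Q.src y ∉ supp → ¬ Q.rel x y)

def CutPkg (Q : QuadData) (supp : Set Q.V) (b : List Q.E) : Prop :=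
  ∃ hb : b ≠ [], Q.src (b.head hb) ∉ supp ∧
    (b.Chain' fun x y => Q.rel x y ∧ Q.src y ∈ supp) ∧ Q.tgt (b.getLast hb) ∉ supp

def IdemPkg (Q : QuadData) (supp : Set Q.V) (b : List Q.E) : Prop :=
  ∃ hb : b ≠ [], Q.src (b.head hb) ∈ supp ∧
    (b.Chain' fun x y => Q.tgt x = Q.src y ∧ ¬ Q.rel x y ∧ Q.src y ∉ supp) ∧
    Q.tgt (b.getLast hb) ∈ supp

def mkCutM (Q : QuadData) (supp : Set Q.V) (bs : List (List Q.E))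
    (hpkg : ∀ b ∈ bs, CutPkg Q supp b) (bp : {b // b ∈ bs}) : Q.CutArrow supp where
  letters := bp.1
  ne := (hpkg bp.1 bp.2).choose
  chain := (hpkg bp.1 bp.2).choose_spec.2.1
  src_out := (hpkg bp.1 bp.2).choose_spec.1
  tgt_out := (hpkg bp.1 bp.2).choose_spec.2.2

def mkIdemM (Q : QuadData) (supp : Set Q.V) (bs : List (List Q.E))
    (hpkg : ∀ b ∈ bs, IdemPkg Q supp b) (bp : {b // b ∈ bs}) : Q.IdemArrow supp where
  letters := bp.1
  ne := (hpkg bp.1 bp.2).choose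
  chain := (hpkg bp.1 bp.2).choose_spec.2.1
  src_in := (hpkg bp.1 bp.2).choose_spec.1
  tgt_in := (hpkg bp.1 bp.2).choose_spec.2.2

theorem cut_relCycle_of_blocks {bs : List (List Q.E)} (hbs : bs ≠ [])
    (hpkg : ∀ b ∈ bs, CutPkg Q supp b)
    (houter : bs.Chain' fun b c => ∀ (h1 : b ≠ []) (h2 : c ≠ []),
      Q.rel (b.getLast h1) (c.head h2))
    (hclose : ∀ (h1 : bs.getLast hbs ≠ []) (h2 : bs.head hbs ≠ []),
      Q.rel ((bs.getLast hbs).getLast h1) ((bs.head hbs).head h2)) :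
    (Q.cut supp).RelCycle := by
  classical
  have hAne : bs.attach ≠ [] := CycAux.attach_ne hbs
  have hbl : bs.getLast hbs ≠ [] := (hpkg _ (List.getLast_mem hbs)).choose
  have hbh : bs.head hbs ≠ [] := (hpkg _ (List.head_mem hbs)).choose
  have hLne : bs.attach.map (mkCutM Q supp bs hpkg) ≠ [] := by
    intro h; rcases hAB : bs.attach with _ | _
    · exact hAne hAB
    · rw [hAB] at h; simp at h
  have hAch : bs.attach.Chain' fun bp cp => ∀ (h1 : bp.1 ≠ []) (h2 : cp.1 ≠ []),
      Q.rel (bp.1.getLast h1) (cp.1.head h2) := by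
    exact CycAux.chain'_attach_of houter
  refine ⟨bs.attach.map (mkCutM Q supp bs hpkg), hLne, ?_, ?_⟩
  · show (bs.attach.map (mkCutM Q supp bs hpkg)).Chain' ((Q.cut supp).rel)
    refine (List.isChain_map _).mpr (hAch.imp (fun bp cp h => ?_))
    exact h (hpkg bp.1 bp.2).choose (hpkg cp.1 cp.2).choose
  · rw [List.getLast_map hLne, List.head_map hLne]
    show Q.rel (((bs.attach.getLast hAne).1).getLast _) (((bs.attach.head hAne).1).head _)
    exact CycAux.getLast_head_congr (CycAux.getLast_attach_val hbs hAne)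
      (CycAux.head_attach_val hbs hAne) hbl hbh (hclose hbl hbh) _ _

theorem idem_relCycle_of_blocks {bs : List (List Q.E)} (hbs : bs ≠ [])
    (hpkg : ∀ b ∈ bs, IdemPkg Q supp b)
    (houter : bs.Chain' fun b c => ∀ (h1 : b ≠ []) (h2 : c ≠ []),
      Q.rel (b.getLast h1) (c.head h2))
    (hclose : ∀ (h1 : bs.getLast hbs ≠ []) (h2 : bs.head hbs ≠ []),
      Q.rel ((bs.getLast hbs).getLast h1) ((bs.head hbs).head h2)) :
    (Q.idem supp).RelCycle := by
  classical
  have hAne : bs.attach ≠ [] := CycAux.attach_ne hbs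
  have hbl : bs.getLast hbs ≠ [] := (hpkg _ (List.getLast_mem hbs)).choose
  have hbh : bs.head hbs ≠ [] := (hpkg _ (List.head_mem hbs)).choose
  have hLne : bs.attach.map (mkIdemM Q supp bs hpkg) ≠ [] := by
    intro h; rcases hAB : bs.attach with _ | _
    · exact hAne hAB
    · rw [hAB] at h; simp at h
  have hAch : bs.attach.Chain' fun bp cp => ∀ (h1 : bp.1 ≠ []) (h2 : cp.1 ≠ []),
      Q.rel (bp.1.getLast h1) (cp.1.head h2) := by
    exact CycAux.chain'_attach_of houter
  refine ⟨bs.attach.map (mkIdemM Q supp bs hpkg), hLne, ?_, ?_⟩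
  · show (bs.attach.map (mkIdemM Q supp bs hpkg)).Chain' ((Q.idem supp).rel)
    refine (List.isChain_map _).mpr (hAch.imp (fun bp cp h => ?_))
    exact h (hpkg bp.1 bp.2).choose (hpkg cp.1 cp.2).choose
  · rw [List.getLast_map hLne, List.head_map hLne]
    show Q.rel (((bs.attach.getLast hAne).1).getLast _) (((bs.attach.head hAne).1).head _)
    exact CycAux.getLast_head_congr (CycAux.getLast_attach_val hbs hAne)
      (CycAux.head_attach_val hbs hAne) hbl hbh (hclose hbl hbh) _ _

theorem cut_relFreeCycle_of_blocks {bs : List (List Q.E)} (hbs : bs ≠ [])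
    (hpkg : ∀ b ∈ bs, CutPkg Q supp b)
    (houter : bs.Chain' fun b c => ∀ (h1 : b ≠ []) (h2 : c ≠ []),
      Q.tgt (b.getLast h1) = Q.src (c.head h2) ∧ ¬ Q.rel (b.getLast h1) (c.head h2))
    (hclose : ∀ (h1 : bs.getLast hbs ≠ []) (h2 : bs.head hbs ≠ []),
      Q.tgt ((bs.getLast hbs).getLast h1) = Q.src ((bs.head hbs).head h2) ∧
        ¬ Q.rel ((bs.getLast hbs).getLast h1) ((bs.head hbs).head h2)) :
    (Q.cut supp).RelFreeCycle := by
  classical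
  have hAne : bs.attach ≠ [] := CycAux.attach_ne hbs
  have hbl : bs.getLast hbs ≠ [] := (hpkg _ (List.getLast_mem hbs)).choose
  have hbh : bs.head hbs ≠ [] := (hpkg _ (List.head_mem hbs)).choose
  have hLne : bs.attach.map (mkCutM Q supp bs hpkg) ≠ [] := by
    intro h; rcases hAB : bs.attach with _ | _
    · exact hAne hAB
    · rw [hAB] at h; simp at h
  have hAch : bs.attach.Chain' fun bp cp => ∀ (h1 : bp.1 ≠ []) (h2 : cp.1 ≠ []),
      Q.tgt (bp.1.getLast h1) = Q.src (cp.1.head h2) ∧ ¬ Q.rel (bp.1.getLast h1) (cp.1.head h2) := by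
    exact CycAux.chain'_attach_of houter
  refine ⟨bs.attach.map (mkCutM Q supp bs hpkg), hLne, ?_, ?_, ?_, ?_⟩
  · show (bs.attach.map (mkCutM Q supp bs hpkg)).Chain'
      fun p q => (Q.cut supp).tgt p = (Q.cut supp).src q
    refine (List.isChain_map _).mpr (hAch.imp (fun bp cp h => ?_))
    exact Subtype.ext (h (hpkg bp.1 bp.2).choose (hpkg cp.1 cp.2).choose).1
  · show (bs.attach.map (mkCutM Q supp bs hpkg)).Chain' fun p q => ¬ (Q.cut supp).rel p q
    refine (List.isChain_map _).mpr (hAch.imp (fun bp cp h => ?_))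
    exact (h (hpkg bp.1 bp.2).choose (hpkg cp.1 cp.2).choose).2
  · rw [List.getLast_map hLne, List.head_map hLne]
    refine Subtype.ext ?_
    show Q.tgt (((bs.attach.getLast hAne).1).getLast _) = Q.src (((bs.attach.head hAne).1).head _)
    exact CycAux.getLast_head_congr (R := fun x y => Q.tgt x = Q.src y)
      (CycAux.getLast_attach_val hbs hAne) (CycAux.head_attach_val hbs hAne) hbl hbh
      (hclose hbl hbh).1 _ _
  · rw [List.getLast_map hLne, List.head_map hLne]
    show ¬ Q.rel (((bs.attach.getLast hAne).1).getLast _) (((bs.attach.head hAne).1).head _)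
    exact CycAux.getLast_head_congr (R := fun x y => ¬ Q.rel x y)
      (CycAux.getLast_attach_val hbs hAne) (CycAux.head_attach_val hbs hAne) hbl hbh
      (hclose hbl hbh).2 _ _

theorem idem_relFreeCycle_of_blocks {bs : List (List Q.E)} (hbs : bs ≠ [])
    (hpkg : ∀ b ∈ bs, IdemPkg Q supp b)
    (houter : bs.Chain' fun b c => ∀ (h1 : b ≠ []) (h2 : c ≠ []),
      Q.tgt (b.getLast h1) = Q.src (c.head h2) ∧ ¬ Q.rel (b.getLast h1) (c.head h2))
    (hclose : ∀ (h1 : bs.getLast hbs ≠ []) (h2 : bs.head hbs ≠ []),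
      Q.tgt ((bs.getLast hbs).getLast h1) = Q.src ((bs.head hbs).head h2) ∧
        ¬ Q.rel ((bs.getLast hbs).getLast h1) ((bs.head hbs).head h2)) :
    (Q.idem supp).RelFreeCycle := by
  classical
  have hAne : bs.attach ≠ [] := CycAux.attach_ne hbs
  have hbl : bs.getLast hbs ≠ [] := (hpkg _ (List.getLast_mem hbs)).choose
  have hbh : bs.head hbs ≠ [] := (hpkg _ (List.head_mem hbs)).choose
  have hLne : bs.attach.map (mkIdemM Q supp bs hpkg) ≠ [] := by
    intro h; rcases hAB : bs.attach with _ | _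
    · exact hAne hAB
    · rw [hAB] at h; simp at h
  have hAch : bs.attach.Chain' fun bp cp => ∀ (h1 : bp.1 ≠ []) (h2 : cp.1 ≠ []),
      Q.tgt (bp.1.getLast h1) = Q.src (cp.1.head h2) ∧ ¬ Q.rel (bp.1.getLast h1) (cp.1.head h2) := by
    exact CycAux.chain'_attach_of houter
  refine ⟨bs.attach.map (mkIdemM Q supp bs hpkg), hLne, ?_, ?_, ?_, ?_⟩
  · show (bs.attach.map (mkIdemM Q supp bs hpkg)).Chain'
      fun p q => (Q.idem supp).tgt p = (Q.idem supp).src q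
    refine (List.isChain_map _).mpr (hAch.imp (fun bp cp h => ?_))
    exact Subtype.ext (h (hpkg bp.1 bp.2).choose (hpkg cp.1 cp.2).choose).1
  · show (bs.attach.map (mkIdemM Q supp bs hpkg)).Chain' fun p q => ¬ (Q.idem supp).rel p q
    refine (List.isChain_map _).mpr (hAch.imp (fun bp cp h => ?_))
    exact (h (hpkg bp.1 bp.2).choose (hpkg cp.1 cp.2).choose).2
  · rw [List.getLast_map hLne, List.head_map hLne]
    refine Subtype.ext ?_
    show Q.tgt (((bs.attach.getLast hAne).1).getLast _) = Q.src (((bs.attach.head hAne).1).head _)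
    exact CycAux.getLast_head_congr (R := fun x y => Q.tgt x = Q.src y)
      (CycAux.getLast_attach_val hbs hAne) (CycAux.head_attach_val hbs hAne) hbl hbh
      (hclose hbl hbh).1 _ _
  · rw [List.getLast_map hLne, List.head_map hLne]
    show ¬ Q.rel (((bs.attach.getLast hAne).1).getLast _) (((bs.attach.head hAne).1).head _)
    exact CycAux.getLast_head_congr (R := fun x y => ¬ Q.rel x y)
      (CycAux.getLast_attach_val hbs hAne) (CycAux.head_attach_val hbs hAne) hbl hbh
      (hclose hbl hbh).2 _ _

end QuadData
namespace QuadData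

variable {Q : QuadData} {supp : Set Q.V}

theorem relFreeCycle_split (h : Q.RelFreeCycle) :
    (Q.cut supp).RelFreeCycle ∨ (Q.idem supp).RelFreeCycle := by
  classical
  obtain ⟨l, hl, hcomp, havoid, hcl1, hcl2⟩ := h
  have hch : l.Chain' fun x y => Q.tgt x = Q.src y ∧ ¬ Q.rel x y := CycAux.chain'_and hcomp havoid
  by_cases hex : ∃ x ∈ l, Q.src x ∈ supp
  · right
    obtain ⟨a, hal, haS⟩ := hex
    obtain ⟨bs, hbs, hpkg, houter, hclose⟩ :=
      CycAux.splitCyclic (S := fun e => Q.src e ∈ supp) hl hch ⟨hcl1, hcl2⟩ hal haS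
    refine idem_relFreeCycle_of_blocks hbs ?_ houter hclose
    intro b hb
    obtain ⟨hbne, hS, hchb, hmemb, y, hyl, hRy, hSy⟩ := hpkg b hb
    refine ⟨hbne, hS, hchb.imp (fun u v huv => ⟨huv.1.1, huv.1.2, huv.2⟩), ?_⟩
    rw [hRy.1]; exact hSy
  · left
    push_neg at hex
    have hhd : Q.src (l.head hl) ∉ supp := hex _ (List.head_mem hl)
    obtain ⟨bs, hbs, hpkg, houter, hclose⟩ :=
      CycAux.splitCyclic (S := fun e => Q.src e ∉ supp) hl hch ⟨hcl1, hcl2⟩ (List.head_mem hl) hhd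
    refine cut_relFreeCycle_of_blocks hbs ?_ houter hclose
    intro b hb
    obtain ⟨hbne, hS, hchb, hmemb, y, hyl, hRy, hSy⟩ := hpkg b hb
    refine ⟨hbne, hS, ?_, ?_⟩
    · exact CycAux.chain'_imp_mem (fun u hu v hv huv => absurd (hex v (hmemb v hv)) huv.2) hchb
    · rw [hRy.1]; exact hSy

theorem relCycle_split (h : Q.RelCycle) :
    (Q.cut supp).RelCycle ∨ (Q.idem supp).RelCycle := by
  classical
  obtain ⟨l, hl, hall, hclr⟩ := h
  have hch : l.Chain' Q.rel := hall
  by_cases hex : ∃ x ∈ l, Q.src x ∉ supp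
  · left
    obtain ⟨a, hal, haS⟩ := hex
    obtain ⟨bs, hbs, hpkg, houter, hclose⟩ :=
      CycAux.splitCyclic (S := fun e => Q.src e ∉ supp) hl hch hclr hal haS
    refine cut_relCycle_of_blocks hbs ?_ houter hclose
    intro b hb
    obtain ⟨hbne, hS, hchb, hmemb, y, hyl, hRy, hSy⟩ := hpkg b hb
    refine ⟨hbne, hS, hchb.imp (fun u v huv => ⟨huv.1, not_not.mp huv.2⟩), ?_⟩
    rw [Q.rel_comp _ _ hRy]; exact hSy
  · right
    push_neg at hex
    have hhd : Q.src (l.head hl) ∈ supp := hex _ (List.head_mem hl)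
    obtain ⟨bs, hbs, hpkg, houter, hclose⟩ :=
      CycAux.splitCyclic (S := fun e => Q.src e ∈ supp) hl hch hclr (List.head_mem hl) hhd
    refine idem_relCycle_of_blocks hbs ?_ houter hclose
    intro b hb
    obtain ⟨hbne, hS, hchb, hmemb, y, hyl, hRy, hSy⟩ := hpkg b hb
    refine ⟨hbne, hS, ?_, ?_⟩
    · exact CycAux.chain'_imp_mem (fun u hu v hv huv => absurd (hex v (hmemb v hv)) huv.2) hchb
    · rw [Q.rel_comp _ _ hRy]; exact hSy

theorem cut_relCycle_flatten (h : (Q.cut supp).RelCycle) : Q.RelCycle := by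
  obtain ⟨as, has, hall, hclr⟩ := h
  obtain ⟨L, hL, hch, hcl, _⟩ := CycAux.arrow_flatten
    (fun p : Q.CutArrow supp => p.letters) (fun p => p.ne)
    (R := Q.rel) (fun p => p.chain.imp (fun x y h => h.1)) has hall hclr
  exact ⟨L, hL, hch, hcl⟩

theorem idem_relFreeCycle_flatten (h : (Q.idem supp).RelFreeCycle) : Q.RelFreeCycle := by
  obtain ⟨as, has, hcomp, havoid, hcl1, hcl2⟩ := h
  have houter : as.Chain' fun p q =>
      Q.tgt (p.letters.getLast p.ne) = Q.src (q.letters.head q.ne) ∧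
      ¬ Q.rel (p.letters.getLast p.ne) (q.letters.head q.ne) :=
    (CycAux.chain'_and hcomp havoid).imp
      (fun p q h => ⟨congrArg Subtype.val h.1, h.2⟩)
  obtain ⟨L, hL, hch, hcl, _⟩ := CycAux.arrow_flatten
    (fun p : Q.IdemArrow supp => p.letters) (fun p => p.ne)
    (R := fun x y => Q.tgt x = Q.src y ∧ ¬ Q.rel x y)
    (fun p => p.chain.imp (fun x y h => ⟨h.1, h.2.1⟩)) has houter
    ⟨congrArg Subtype.val hcl1, hcl2⟩
  exact ⟨L, hL, hch.imp (fun x y h => h.1), hch.imp (fun x y h => h.2), hcl.1, hcl.2⟩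

theorem cut_relFreeCycle_flatten (h : (Q.cut supp).RelFreeCycle) :
    Q.RelFreeCycle ∨ (Q.idem supp).RelCycle := by
  classical
  obtain ⟨as, has, hcomp, havoid, hcl1, hcl2⟩ := h
  have houter : as.Chain' fun p q =>
      Q.Mrel supp (p.letters.getLast p.ne) (q.letters.head q.ne) :=
    (CycAux.chain'_and hcomp havoid).imp
      (fun p q h => ⟨congrArg Subtype.val h.1, fun hin => absurd hin q.src_out, fun _ => h.2⟩)
  obtain ⟨L, hL, hch, hcl, hmem⟩ := CycAux.arrow_flatten
    (fun p : Q.CutArrow supp => p.letters) (fun p => p.ne)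
    (R := Q.Mrel supp)
    (fun p => p.chain.imp (fun x y h =>
      ⟨Q.rel_comp _ _ h.1, fun _ => h.1, fun hn => absurd h.2 hn⟩)) has houter
    ⟨congrArg Subtype.val hcl1, fun hin => absurd hin (as.head has).src_out, fun _ => hcl2⟩
  by_cases hex : ∃ x ∈ L, Q.src x ∈ supp
  · right
    obtain ⟨a, hal, haS⟩ := hex
    obtain ⟨bs, hbs, hpkg, houter2, hclose2⟩ :=
      CycAux.splitCyclic (S := fun e => Q.src e ∈ supp) hL hch hcl hal haS
    refine idem_relCycle_of_blocks hbs ?_ ?_ ?_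
    · intro b hb
      obtain ⟨hbne, hS, hchb, hmemb, y, hyl, hRy, hSy⟩ := hpkg b hb
      refine ⟨hbne, hS, hchb.imp (fun u v huv => ⟨huv.1.1, huv.1.2.2 huv.2, huv.2⟩), ?_⟩
      rw [hRy.1]; exact hSy
    · refine CycAux.chain'_imp_mem (fun b hb c hc hT h1 h2 => ?_) houter2
      obtain ⟨hcne, hcS, _⟩ := hpkg c hc
      exact (hT h1 h2).2.1 hcS
    · intro h1 h2
      obtain ⟨hcne, hcS, _⟩ := hpkg (bs.head hbs) (List.head_mem hbs)
      exact (hclose2 h1 h2).2.1 hcS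
  · left
    push_neg at hex
    refine ⟨L, hL, ?_, ?_, hcl.1, hcl.2.2 (hex _ (List.head_mem hL))⟩
    · exact CycAux.chain'_imp_mem (fun u hu v hv huv => huv.1) hch
    · exact CycAux.chain'_imp_mem (fun u hu v hv huv => huv.2.2 (hex v hv)) hch

theorem idem_relCycle_flatten (h : (Q.idem supp).RelCycle) :
    Q.RelCycle ∨ (Q.cut supp).RelFreeCycle := by
  classical
  obtain ⟨as, has, hall, hclr⟩ := h
  have houter : as.Chain' fun p q =>
      Q.Mrel supp (p.letters.getLast p.ne) (q.letters.head q.ne) :=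
    hall.imp (fun p q h =>
      ⟨Q.rel_comp _ _ h, fun _ => h, fun hn => absurd q.src_in hn⟩)
  obtain ⟨L, hL, hch, hcl, hmem⟩ := CycAux.arrow_flatten
    (fun p : Q.IdemArrow supp => p.letters) (fun p => p.ne)
    (R := Q.Mrel supp)
    (fun p => p.chain.imp (fun x y h =>
      ⟨h.1, fun hin => absurd hin h.2.2, fun _ => h.2.1⟩)) has houter
    ⟨Q.rel_comp _ _ hclr, fun _ => hclr, fun hn => absurd (as.head has).src_in hn⟩
  by_cases hex : ∃ x ∈ L, Q.src x ∉ supp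
  · right
    obtain ⟨a, hal, haS⟩ := hex
    obtain ⟨bs, hbs, hpkg, houter2, hclose2⟩ :=
      CycAux.splitCyclic (S := fun e => Q.src e ∉ supp) hL hch hcl hal haS
    refine cut_relFreeCycle_of_blocks hbs ?_ ?_ ?_
    · intro b hb
      obtain ⟨hbne, hS, hchb, hmemb, y, hyl, hRy, hSy⟩ := hpkg b hb
      refine ⟨hbne, hS, hchb.imp (fun u v huv =>
        ⟨huv.1.2.1 (not_not.mp huv.2), not_not.mp huv.2⟩), ?_⟩
      rw [hRy.1]; exact hSy
    · refine CycAux.chain'_imp_mem (fun b hb c hc hT h1 h2 => ?_) houter2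
      obtain ⟨hcne, hcS, _⟩ := hpkg c hc
      exact ⟨(hT h1 h2).1, (hT h1 h2).2.2 hcS⟩
    · intro h1 h2
      obtain ⟨hcne, hcS, _⟩ := hpkg (bs.head hbs) (List.head_mem hbs)
      exact ⟨(hclose2 h1 h2).1, (hclose2 h1 h2).2.2 hcS⟩
  · left
    push_neg at hex
    refine ⟨L, hL, ?_, hcl.2.1 (hex _ (List.head_mem hL))⟩
    exact CycAux.chain'_imp_mem (fun u hu v hv huv => huv.2.1 (hex v hv)) hch

end QuadData

/-- Let `A = kQ/I` be a graded gentle algebra and `e` a sum of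
vertex idempotents with support `supp`.  If both `A_e` and `eAe` are proper then so
is `A`; dually for homological smoothness.  Combined with the characterisation of
Statement 10, if any two of `A`, `eAe`, `A_e` are both homologically smooth and
proper then so is the third. -/
theorem two_out_of_three_smooth_proper (Q : QuadData) (hg : Q.IsGentle)
    (supp : Set Q.V) :
    ((Q.cut supp).ProperP → (Q.idem supp).ProperP → Q.ProperP) ∧
    ((Q.cut supp).SmoothP → (Q.idem supp).SmoothP → Q.SmoothP) ∧
    ((Q.SmoothP ∧ Q.ProperP) → ((Q.idem supp).SmoothP ∧ (Q.idem supp).ProperP) →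
      ((Q.cut supp).SmoothP ∧ (Q.cut supp).ProperP)) ∧
    ((Q.SmoothP ∧ Q.ProperP) → ((Q.cut supp).SmoothP ∧ (Q.cut supp).ProperP) →
      ((Q.idem supp).SmoothP ∧ (Q.idem supp).ProperP)) ∧
    (((Q.idem supp).SmoothP ∧ (Q.idem supp).ProperP) →
      ((Q.cut supp).SmoothP ∧ (Q.cut supp).ProperP) → (Q.SmoothP ∧ Q.ProperP)) := by
  constructor
  · intro hc hi h
    rcases QuadData.relFreeCycle_split (supp := supp) h with h' | h'
    · exact hc h'
    · exact hi h'
  refine ⟨?_, ?_, ?_, ?_⟩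
  · intro hc hi h
    rcases QuadData.relCycle_split (supp := supp) h with h' | h'
    · exact hc h'
    · exact hi h'
  · rintro ⟨hQs, hQp⟩ ⟨hIs, hIp⟩
    refine ⟨fun h => hQs (QuadData.cut_relCycle_flatten h), fun h => ?_⟩
    rcases QuadData.cut_relFreeCycle_flatten h with h' | h'
    · exact hQp h'
    · exact hIs h'
  · rintro ⟨hQs, hQp⟩ ⟨hCs, hCp⟩
    refine ⟨fun h => ?_, fun h => hQp (QuadData.idem_relFreeCycle_flatten h)⟩
    rcases QuadData.idem_relCycle_flatten h with h' | h'
    · exact hQs h'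
    · exact hCp h'
  · intro hI hC
    constructor
    · intro h
      rcases QuadData.relCycle_split (supp := supp) h with h' | h'
      · exact hC.1 h'
      · exact hI.1 h'
    · intro h
      rcases QuadData.relFreeCycle_split (supp := supp) h with h' | h'
      · exact hC.2 h'
      · exact hI.2 h'
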